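/- Let {S_f, P_v} be a Toeplitz–Cuntz–Krieger E-family on a Hilbert space H. Then C*(S,P), the smallest norm-closed *-subalgebra of B(H) containing all the S_f and P_v, equals the closed linear span of the set {S_μ S_ν* : μ, ν paths in E (including trivial paths)}. -/

import Mathlib

/-- `IsPathFrom r s v l` : the list of edges `l` is a (possibly empty) path starting at the
vertex `v`: consecutive edges are composable, and the first edge (if any) has source `v`.
The empty list represents the trivial path at `v`. -/
def IsPathFrom {V Ed : Type*} (r s : Ed → V) (v : V) (l : List Ed) : Prop :=
  l.Chain' (fun e f => r e = s f) ∧ ∀ e ∈ l.head?, s e = v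

/-- The range vertex of the path `(v, l)`: `v` if `l` is empty, and the range of the last
edge otherwise. -/
def pathEnd {V Ed : Type*} (r : Ed → V) (v : V) (l : List Ed) : V :=
  (l.getLast?).elim v r

/-- `S_μ` for the path `μ = (v, l)` : the product `S_{f₁} ⋯ S_{f_n}` of the edge operators,
and `P_v` for the trivial path at `v`. -/
def sPath {V Ed α : Type*} [Monoid α] (P : V → α) (S : Ed → α) (v : V) (l : List Ed) : α :=
  match l with
  | [] => P v
  | l => (l.map S).prod

/-- A Toeplitz–Cuntz–Krieger `E`-family on a Hilbert space `H`, for the directed graph with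
vertices `V`, edges `Ed` and range and source maps `r s : Ed → V`. -/
def IsTCKFamily {V Ed : Type*} {H : Type*} [NormedAddCommGroup H] [InnerProductSpace ℂ H]
    [CompleteSpace H] (r s : Ed → V) (P : V → (H →L[ℂ] H)) (S : Ed → (H →L[ℂ] H)) : Prop :=
  (∀ v, IsSelfAdjoint (P v)) ∧ (∀ v, IsIdempotentElem (P v)) ∧
  (∀ v w, v ≠ w → P v * P w = 0) ∧
  (∀ f, star (S f) * S f = P (r f)) ∧
  (∀ e f, e ≠ f → (S e * star (S e)) * (S f * star (S f)) = 0) ∧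
  (∀ (v : V) (F : Finset Ed), (∀ f ∈ F, s f = v) → (∑ f ∈ F, S f * star (S f)) ≤ P v)

section Aux

variable {V Ed : Type*} {H : Type*} [NormedAddCommGroup H] [InnerProductSpace ℂ H]
  [CompleteSpace H] {r s : Ed → V} {P : V → (H →L[ℂ] H)} {S : Ed → (H →L[ℂ] H)}

open ContinuousLinearMap in
lemma aux_star_mul_self_isPositive (x : H →L[ℂ] H) : (star x * x).IsPositive := by
  have h := (isPositive_one (E := H) (𝕜 := ℂ)).adjoint_conj x
  simpa [mul_def, ← star_eq_adjoint, one_def, id_comp] using h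

open ContinuousLinearMap in
/-- For projections `q ≤ p` on a Hilbert space, `p * q = q`. -/
lemma aux_proj_mul_of_le {p q : H →L[ℂ] H} (hp : IsSelfAdjoint p) (hpi : p * p = p)
    (hq : IsSelfAdjoint q) (hqi : q * q = q) (h : q ≤ p) : p * q = q := by
  have hpos : (p - q).IsPositive := (le_def q p).mp h
  set c : H →L[ℂ] H := 1 - p with hc
  have hcsa : IsSelfAdjoint c := ((IsSelfAdjoint.one (R := H →L[ℂ] H))).sub hp
  have h1 : ((adjoint c) ∘L ((p - q) ∘L c)).IsPositive := hpos.adjoint_conj c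
  have hca : adjoint c = c := by rw [← star_eq_adjoint]; exact hcsa
  have h1' : (c * (p - q) * c).IsPositive := by
    rw [hca] at h1
    simpa [mul_def, mul_assoc, comp_assoc] using h1
  have hkey : c * (p - q) * c = -(star (q * c) * (q * c)) := by
    have hqc : star (q * c) = c * q := by
      rw [star_mul, hcsa.star_eq, hq.star_eq]
    rw [hqc]
    have : c * q * (q * c) = c * q * c := by
      rw [mul_assoc c q (q * c), ← mul_assoc q q c, hqi, ← mul_assoc]
    rw [this, hc]
    noncomm_ring
    simp [hpi]
    noncomm_ring
  set B : H →L[ℂ] H := star (q * c) * (q * c) with hB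
  have hBpos : B.IsPositive := aux_star_mul_self_isPositive _
  have hBneg : (-B).IsPositive := by rw [← hkey]; exact h1'
  have hB0 : B = 0 := by
    have h1 : (0 : H →L[ℂ] H) ≤ B := (nonneg_iff_isPositive B).mpr hBpos
    have h2 : B ≤ 0 := (le_def B 0).mpr (by simpa using hBneg)
    exact le_antisymm h2 h1
  have hqc0 : q * c = 0 := (CStarRing.star_mul_self_eq_zero_iff _).mp hB0
  have hqp : q * p = q := by
    have : q * (1 - p) = 0 := hqc0
    rw [mul_sub, mul_one, sub_eq_zero] at this
    exact this.symm
  calc p * q = star (q * p) := by rw [star_mul, hp.star_eq, hq.star_eq]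
    _ = star q := by rw [hqp]
    _ = q := hq.star_eq

/-- Partial isometry identity from `star a * a` being idempotent. -/
lemma aux_pi {a p : H →L[ℂ] H} (h : star a * a = p) (hp : p * p = p) :
    a * star a * a = a := by
  have e2 : ∀ X : H →L[ℂ] H, star a * (a * X) = p * X := fun X => by
    rw [← mul_assoc, h]
  have h0 : star (a * star a * a - a) * (a * star a * a - a) = 0 := by
    have hps : star p = p := by rw [← h, star_mul, star_star]
    simp only [star_sub, star_mul, star_star, sub_mul, mul_sub, mul_assoc, e2, h, hps]
    rw [← mul_assoc p p p, hp, hp]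
    abel
  have := (CStarRing.star_mul_self_eq_zero_iff _).mp h0
  rwa [sub_eq_zero] at this

variable (hT : IsTCKFamily r s P S)
include hT

lemma tck_pi (f : Ed) : S f * star (S f) * S f = S f :=
  aux_pi (hT.2.2.2.1 f) (hT.2.1 (r f))

lemma tck_SP (f : Ed) : S f * P (r f) = S f := by
  rw [← hT.2.2.2.1 f, ← mul_assoc, tck_pi hT]

lemma tck_SP0 {f : Ed} {v : V} (hv : v ≠ r f) : S f * P v = 0 := by
  rw [← tck_SP hT f, mul_assoc, hT.2.2.1 _ _ (Ne.symm hv), mul_zero]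

lemma tck_PS (f : Ed) : P (s f) * S f = S f := by
  have hQle : S f * star (S f) ≤ P (s f) := by
    have := hT.2.2.2.2.2 (s f) {f} (by simp)
    simpa using this
  have hQsa : IsSelfAdjoint (S f * star (S f)) := by
    rw [IsSelfAdjoint, star_mul, star_star]
  have hQi : (S f * star (S f)) * (S f * star (S f)) = S f * star (S f) := by
    rw [← mul_assoc, mul_assoc (S f) (star (S f)) (S f), ← mul_assoc, tck_pi hT]
  have hPQ : P (s f) * (S f * star (S f)) = S f * star (S f) :=
    aux_proj_mul_of_le (hT.1 (s f)) (hT.2.1 (s f)) hQsa hQi hQle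
  calc P (s f) * S f = P (s f) * (S f * star (S f) * S f) := by rw [tck_pi hT]
    _ = P (s f) * (S f * star (S f)) * S f := by noncomm_ring
    _ = S f * star (S f) * S f := by rw [hPQ]
    _ = S f := tck_pi hT f

lemma tck_PS0 {f : Ed} {v : V} (hv : v ≠ s f) : P v * S f = 0 := by
  rw [← tck_PS hT f, ← mul_assoc, hT.2.2.1 _ _ hv, zero_mul]

lemma tck_SsS0 {e f : Ed} (hef : e ≠ f) : star (S e) * S f = 0 := by
  have h1 : star (S e) = star (S e) * (S e * star (S e)) := by
    conv_lhs => rw [← tck_pi hT e]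
    rw [star_mul, star_mul, star_star]
  have h2 : S f = (S f * star (S f)) * S f := by
    rw [mul_assoc, ← mul_assoc, tck_pi hT]
  rw [h1, h2, mul_assoc, ← mul_assoc (S e * star (S e)), hT.2.2.2.2.1 e f hef,
    zero_mul, mul_zero]

lemma tck_sPath_cons (v : V) (e : Ed) (l : List Ed) :
    sPath P S v (e :: l) = S e * sPath P S (r e) l := by
  cases l with
  | nil =>
    show ([e].map S).prod = S e * P (r e)
    rw [List.map_singleton, List.prod_singleton, tck_SP hT]
  | cons g t =>
    show ((e :: g :: t).map S).prod = S e * ((g :: t).map S).prod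
    rw [List.map_cons, List.prod_cons]

omit hT

lemma pathEnd_nil (v : V) : pathEnd r v ([] : List Ed) = v := rfl

lemma pathEnd_cons (v : V) (e : Ed) (l : List Ed) :
    pathEnd r v (e :: l) = pathEnd r (r e) l := by
  cases l with
  | nil => rfl
  | cons g t =>
    have hsome : (g :: t).getLast?.isSome := by
      rw [List.getLast?_isSome]; exact (List.cons_ne_nil g t)
    obtain ⟨x, hx⟩ := Option.isSome_iff_exists.mp hsome
    simp [pathEnd, hx]

lemma isPathFrom_nil (v : V) : IsPathFrom r s v ([] : List Ed) :=
  ⟨List.isChain_nil, by simp⟩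

lemma isPathFrom_cons_iff {v : V} {e : Ed} {l : List Ed} :
    IsPathFrom r s v (e :: l) ↔ s e = v ∧ IsPathFrom r s (r e) l := by
  constructor
  · rintro ⟨hc, hh⟩
    replace hc := List.isChain_cons.mp hc
    exact ⟨hh e (by simp), hc.2, fun g hg => (hc.1 g hg).symm⟩
  · rintro ⟨hv, hc, hh⟩
    refine ⟨List.isChain_cons.mpr ⟨fun g hg => (hh g hg).symm, hc⟩, ?_⟩
    intro g hg
    simp only [List.head?_cons, Option.mem_def, Option.some.injEq] at hg
    rw [← hg]; exact hv

lemma isPathFrom_append_single {w : V} {l : List Ed} {f : Ed}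
    (hl : IsPathFrom r s w l) (hf : pathEnd r w l = s f) :
    IsPathFrom r s w (l ++ [f]) := by
  induction l generalizing w with
  | nil =>
    rw [pathEnd_nil] at hf
    exact ⟨List.isChain_singleton f, by simp [← hf]⟩
  | cons e t ih =>
    obtain ⟨hv, ht⟩ := isPathFrom_cons_iff.mp hl
    rw [pathEnd_cons] at hf
    exact isPathFrom_cons_iff.mpr ⟨hv, ih ht hf⟩

include hT

lemma tck_sPath_endP {v : V} {l : List Ed} (hl : IsPathFrom r s v l) :
    sPath P S v l * P (pathEnd r v l) = sPath P S v l := by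
  induction l generalizing v with
  | nil => exact hT.2.1 v
  | cons e t ih =>
    obtain ⟨hv, ht⟩ := isPathFrom_cons_iff.mp hl
    rw [tck_sPath_cons hT, pathEnd_cons, mul_assoc, ih ht]

lemma tck_sPath_endP0 {v u : V} {l : List Ed} (hl : IsPathFrom r s v l)
    (hu : u ≠ pathEnd r v l) : sPath P S v l * P u = 0 := by
  rw [← tck_sPath_endP hT hl, mul_assoc, hT.2.2.1 _ _ (Ne.symm hu), mul_zero]

lemma tck_P_sPath {v : V} {l : List Ed} (hl : IsPathFrom r s v l) :
    P v * sPath P S v l = sPath P S v l := by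
  cases l with
  | nil => exact hT.2.1 v
  | cons e t =>
    obtain ⟨hv, _⟩ := isPathFrom_cons_iff.mp hl
    rw [tck_sPath_cons hT, ← mul_assoc, ← hv, tck_PS hT]

lemma tck_P_sPath0 {v u : V} {l : List Ed} (hl : IsPathFrom r s v l) (hu : u ≠ v) :
    P u * sPath P S v l = 0 := by
  rw [← tck_P_sPath hT hl, ← mul_assoc, hT.2.2.1 _ _ hu, zero_mul]

lemma tck_sPath_S {w : V} {l : List Ed} {f : Ed} (hl : IsPathFrom r s w l)
    (hf : pathEnd r w l = s f) :
    sPath P S w l * S f = sPath P S w (l ++ [f]) := by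
  induction l generalizing w with
  | nil =>
    rw [pathEnd_nil] at hf
    show P w * S f = sPath P S w [f]
    have : sPath P S w [f] = S f := by
      show ([f].map S).prod = S f
      simp
    rw [this, hf, tck_PS hT]
  | cons e t ih =>
    obtain ⟨hv, ht⟩ := isPathFrom_cons_iff.mp hl
    rw [pathEnd_cons] at hf
    rw [tck_sPath_cons hT, mul_assoc, ih ht hf, List.cons_append, tck_sPath_cons hT]

lemma tck_sPath_S0 {w : V} {l : List Ed} {f : Ed} (hl : IsPathFrom r s w l)
    (hf : pathEnd r w l ≠ s f) : sPath P S w l * S f = 0 := by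
  rw [← tck_sPath_endP hT hl, mul_assoc, tck_PS0 hT hf, mul_zero]

omit hT

/-- The set of monomials `S_μ S_ν*`. -/
def TCKMon (r s : Ed → V) (P : V → (H →L[ℂ] H)) (S : Ed → (H →L[ℂ] H)) :
    Set (H →L[ℂ] H) :=
  {T : H →L[ℂ] H | ∃ (v : V) (lμ : List Ed) (w : V) (lν : List Ed),
    IsPathFrom r s v lμ ∧ IsPathFrom r s w lν ∧
    T = sPath P S v lμ * star (sPath P S w lν)}

lemma tckMon_star {T : H →L[ℂ] H} (h : T ∈ TCKMon r s P S) :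
    star T ∈ TCKMon r s P S := by
  obtain ⟨v, lμ, w, lν, h1, h2, rfl⟩ := h
  exact ⟨w, lν, v, lμ, h2, h1, by rw [star_mul, star_star]⟩

lemma tckMon0_star {T : H →L[ℂ] H} (h : T ∈ insert 0 (TCKMon r s P S)) :
    star T ∈ insert 0 (TCKMon r s P S) := by
  rcases h with h | h
  · left; simp [h]
  · right; exact tckMon_star h

include hT

lemma tck_P_mul_mem (u : V) {T : H →L[ℂ] H} (h : T ∈ insert 0 (TCKMon r s P S)) :
    P u * T ∈ insert 0 (TCKMon r s P S) := by
  rcases h with h | h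
  · left; simp [h]
  · obtain ⟨v, lμ, w, lν, h1, h2, rfl⟩ := h
    by_cases huv : u = v
    · subst huv
      rw [← mul_assoc, tck_P_sPath hT h1]
      exact Or.inr ⟨u, lμ, w, lν, h1, h2, rfl⟩
    · left
      rw [← mul_assoc, tck_P_sPath0 hT h1 huv, zero_mul]

lemma tck_S_mul_mem (f : Ed) {T : H →L[ℂ] H} (h : T ∈ insert 0 (TCKMon r s P S)) :
    S f * T ∈ insert 0 (TCKMon r s P S) := by
  rcases h with h | h
  · left; simp [h]
  · obtain ⟨v, lμ, w, lν, h1, h2, rfl⟩ := h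
    by_cases hrf : r f = v
    · subst hrf
      have hcons : S f * sPath P S (r f) lμ = sPath P S (s f) (f :: lμ) :=
        (tck_sPath_cons hT _ _ _).symm
      rw [← mul_assoc, hcons]
      exact Or.inr ⟨s f, f :: lμ, w, lν, isPathFrom_cons_iff.mpr ⟨rfl, h1⟩, h2, rfl⟩
    · left
      rw [← mul_assoc, ← tck_P_sPath hT h1, ← mul_assoc,
        tck_SP0 hT (fun hc => hrf hc.symm), zero_mul, zero_mul]

lemma tck_starS_mul_mem (f : Ed) {T : H →L[ℂ] H} (h : T ∈ insert 0 (TCKMon r s P S)) :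
    star (S f) * T ∈ insert 0 (TCKMon r s P S) := by
  rcases h with h | h
  · left; simp [h]
  · obtain ⟨v, lμ, w, lν, h1, h2, rfl⟩ := h
    cases lμ with
    | nil =>
      show star (S f) * (P v * star (sPath P S w lν)) ∈ _
      have hstar : star (S f) * P v = star (P v * S f) := by
        rw [star_mul, (hT.1 v).star_eq]
      by_cases hv : v = s f
      · subst hv
        rw [← mul_assoc, hstar, tck_PS hT, ← star_mul]
        by_cases hend : pathEnd r w lν = s f
        · rw [tck_sPath_S hT h2 hend]
          right
          refine ⟨pathEnd r w (lν ++ [f]), [], w, lν ++ [f], isPathFrom_nil _,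
            isPathFrom_append_single h2 hend, ?_⟩
          show star (sPath P S w (lν ++ [f])) =
            P (pathEnd r w (lν ++ [f])) * star (sPath P S w (lν ++ [f]))
          conv_lhs => rw [← tck_sPath_endP hT (isPathFrom_append_single h2 hend)]
          rw [star_mul, (hT.1 _).star_eq]
        · left
          rw [tck_sPath_S0 hT h2 hend, star_zero]
      · left
        rw [← mul_assoc, hstar, tck_PS0 hT hv, star_zero, zero_mul]
    | cons e t =>
      rw [tck_sPath_cons hT]
      obtain ⟨hv, ht⟩ := isPathFrom_cons_iff.mp h1
      rw [mul_assoc (S e), ← mul_assoc (star (S f)) (S e)]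
      by_cases hef : f = e
      · subst hef
        rw [hT.2.2.2.1 f, ← mul_assoc, tck_P_sPath hT ht]
        exact Or.inr ⟨r f, t, w, lν, ht, h2, rfl⟩
      · left
        rw [tck_SsS0 hT hef, zero_mul]

lemma tck_sPath_mul_mem {w : V} {l : List Ed} (hl : IsPathFrom r s w l)
    {T : H →L[ℂ] H} (h : T ∈ insert 0 (TCKMon r s P S)) :
    sPath P S w l * T ∈ insert 0 (TCKMon r s P S) := by
  induction l generalizing w with
  | nil => exact tck_P_mul_mem hT w h
  | cons e t ih =>
    obtain ⟨hv, ht⟩ := isPathFrom_cons_iff.mp hl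
    rw [tck_sPath_cons hT, mul_assoc]
    exact tck_S_mul_mem hT e (ih ht)

lemma tck_starsPath_mul_mem {w : V} {l : List Ed} (hl : IsPathFrom r s w l)
    {T : H →L[ℂ] H} (h : T ∈ insert 0 (TCKMon r s P S)) :
    star (sPath P S w l) * T ∈ insert 0 (TCKMon r s P S) := by
  induction l generalizing w T with
  | nil =>
    show star (P w) * T ∈ _
    rw [(hT.1 w).star_eq]
    exact tck_P_mul_mem hT w h
  | cons e t ih =>
    obtain ⟨hv, ht⟩ := isPathFrom_cons_iff.mp hl
    rw [tck_sPath_cons hT, star_mul, mul_assoc]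
    exact ih ht (tck_starS_mul_mem hT e h)

lemma tck_mul_mem {T₁ T₂ : H →L[ℂ] H} (h₁ : T₁ ∈ insert 0 (TCKMon r s P S))
    (h₂ : T₂ ∈ insert 0 (TCKMon r s P S)) :
    T₁ * T₂ ∈ insert 0 (TCKMon r s P S) := by
  rcases h₂ with h | h
  · left; simp [h]
  obtain ⟨v, lμ, w, lν, hμ, hν, rfl⟩ := h
  have key : T₁ * (sPath P S v lμ * star (sPath P S w lν)) =
      star (sPath P S w lν * (star (sPath P S v lμ) * star T₁)) := by
    simp only [star_mul, star_star]
    rw [mul_assoc]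
  rw [key]
  exact tckMon0_star
    (tck_sPath_mul_mem hT hν (tck_starsPath_mul_mem hT hμ (tckMon0_star h₁)))

lemma tck_S_mem_mon (f : Ed) : S f ∈ TCKMon r s P S := by
  refine ⟨s f, [f], r f, [], ⟨List.isChain_singleton f, by simp⟩, isPathFrom_nil _, ?_⟩
  have h1 : sPath P S (s f) [f] = S f := by
    show ([f].map S).prod = S f; simp
  show S f = sPath P S (s f) [f] * star (P (r f))
  rw [h1, (hT.1 (r f)).star_eq, tck_SP hT]

lemma tck_P_mem_mon (v : V) : P v ∈ TCKMon r s P S := by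
  refine ⟨v, [], v, [], isPathFrom_nil _, isPathFrom_nil _, ?_⟩
  show P v = P v * star (P v)
  rw [(hT.1 v).star_eq, hT.2.1 v]

end Aux

/-- For a Toeplitz–Cuntz–Krieger `E`-family `{S_f, P_v}` on a Hilbert space `H`, the
smallest norm-closed *-subalgebra `C*(S, P)` of `B(H)` containing all the `S_f` and `P_v`
(i.e. the closure of the non-unital star subalgebra they generate) equals the closed linear
span of `{S_μ S_ν* : μ, ν paths in E (including trivial paths)}`. -/
theorem cstar_SP_eq_closed_span_monomials
    {V Ed : Type*} {H : Type*} [NormedAddCommGroup H] [InnerProductSpace ℂ H]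
    [CompleteSpace H] {r s : Ed → V} {P : V → (H →L[ℂ] H)} {S : Ed → (H →L[ℂ] H)}
    (hTCK : IsTCKFamily r s P S) :
    closure ((NonUnitalStarAlgebra.adjoin ℂ (Set.range S ∪ Set.range P) :
        NonUnitalStarSubalgebra ℂ (H →L[ℂ] H)) : Set (H →L[ℂ] H)) =
      closure ((Submodule.span ℂ
        {T : H →L[ℂ] H | ∃ (v : V) (lμ : List Ed) (w : V) (lν : List Ed),
          IsPathFrom r s v lμ ∧ IsPathFrom r s w lν ∧
          T = sPath P S v lμ * star (sPath P S w lν)} :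
        Submodule ℂ (H →L[ℂ] H)) : Set (H →L[ℂ] H)) := by
  have hMset : {T : H →L[ℂ] H | ∃ (v : V) (lμ : List Ed) (w : V) (lν : List Ed),
      IsPathFrom r s v lμ ∧ IsPathFrom r s w lν ∧
      T = sPath P S v lμ * star (sPath P S w lν)} = TCKMon r s P S := rfl
  rw [hMset]
  set Msp : Submodule ℂ (H →L[ℂ] H) := Submodule.span ℂ (TCKMon r s P S) with hMsp
  set Adj : NonUnitalStarSubalgebra ℂ (H →L[ℂ] H) :=
    NonUnitalStarAlgebra.adjoin ℂ (Set.range S ∪ Set.range P) with hAdj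
  -- facts about the span
  have hM0sub : insert 0 (TCKMon r s P S) ⊆ (Msp : Set (H →L[ℂ] H)) := by
    rintro T (h | h)
    · simpa [h] using (Msp.zero_mem)
    · exact Submodule.subset_span h
  have hstar : ∀ x ∈ Msp, star x ∈ Msp := by
    intro x hx
    induction hx using Submodule.span_induction with
    | mem y hy => exact Submodule.subset_span (tckMon_star hy)
    | zero => simpa using Msp.zero_mem
    | add y z _ _ hy hz => rw [star_add]; exact Msp.add_mem hy hz
    | smul a y _ hy => rw [star_smul]; exact Msp.smul_mem _ hy
  have hmul : ∀ x ∈ Msp, ∀ y ∈ Msp, x * y ∈ Msp := by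
    intro x hx
    induction hx using Submodule.span_induction with
    | mem a ha =>
      intro y hy
      induction hy using Submodule.span_induction with
      | mem b hb => exact hM0sub (tck_mul_mem hTCK (Or.inr ha) (Or.inr hb))
      | zero => simpa using Msp.zero_mem
      | add b c _ _ hb hc => rw [mul_add]; exact Msp.add_mem hb hc
      | smul t b _ hb => rw [mul_smul_comm]; exact Msp.smul_mem _ hb
    | zero => intro y hy; simpa using Msp.zero_mem
    | add a b _ _ ha hb =>
      intro y hy; rw [add_mul]; exact Msp.add_mem (ha y hy) (hb y hy)
    | smul t a _ ha =>
      intro y hy; rw [smul_mul_assoc]; exact Msp.smul_mem _ (ha y hy)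
  -- adjoin ⊆ span
  have hAdjLe : (Adj : Set (H →L[ℂ] H)) ⊆ (Msp : Set (H →L[ℂ] H)) := by
    intro x hx
    induction hx using NonUnitalStarAlgebra.adjoin_induction with
    | mem y hy =>
      rcases hy with ⟨f, rfl⟩ | ⟨v, rfl⟩
      · exact Submodule.subset_span (tck_S_mem_mon hTCK f)
      · exact Submodule.subset_span (tck_P_mem_mon hTCK v)
    | add y z _ _ hy hz => exact Msp.add_mem hy hz
    | zero => exact Msp.zero_mem
    | mul y z _ _ hy hz => exact hmul y hy z hz
    | smul a y _ hy => exact Msp.smul_mem _ hy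
    | star y _ hy => exact hstar y hy
  -- span ⊆ adjoin
  have hsPathAdj : ∀ (u : V) (l : List Ed), sPath P S u l ∈ Adj := by
    intro u l
    induction l generalizing u with
    | nil =>
      exact NonUnitalStarAlgebra.subset_adjoin ℂ _ (Or.inr ⟨u, rfl⟩)
    | cons e t ih =>
      rw [tck_sPath_cons hTCK]
      exact mul_mem (NonUnitalStarAlgebra.subset_adjoin ℂ _ (Or.inl ⟨e, rfl⟩)) (ih (r e))
  have hSpLe : (Msp : Set (H →L[ℂ] H)) ⊆ (Adj : Set (H →L[ℂ] H)) := by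
    intro x hx
    induction hx using Submodule.span_induction with
    | mem y hy =>
      obtain ⟨v, lμ, w, lν, _, _, rfl⟩ := hy
      exact mul_mem (hsPathAdj v lμ) (star_mem (hsPathAdj w lν))
    | zero => exact zero_mem Adj
    | add y z _ _ hy hz => exact add_mem hy hz
    | smul a y _ hy => exact SMulMemClass.smul_mem _ hy
  rw [Set.Subset.antisymm hAdjLe hSpLe]
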